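/- Let n ≥ 2. In the Artin group A(B_n) with standard generators t, s_1, …, s_{n-1}, set δ = t·s_1·s_2⋯s_{n-1} and s_n = δ·s_{n-1}·δ⁻¹. There is a (unique) group homomorphism A(B_n) → ℤ sending t to 1 and each s_i (1 ≤ i ≤ n-1) to 0, and the kernel of this homomorphism equals the subgroup of A(B_n) generated by s_1, …, s_n. -/

import Mathlib

namespace Stmt1

/-- The braid relator `x y x (y x y)⁻¹` (weight 3). -/
def braidRel {γ : Type} (x y : FreeGroup γ) : FreeGroup γ := x * y * x * (y * x * y)⁻¹

/-- The commutation relator `x y (y x)⁻¹` (weight 2). -/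
def commRel {γ : Type} (x y : FreeGroup γ) : FreeGroup γ := x * y * (y * x)⁻¹

/-- The weight-4 relator `x y x y (y x y x)⁻¹`. -/
def w4Rel {γ : Type} (x y : FreeGroup γ) : FreeGroup γ := x * y * x * y * (y * x * y * x)⁻¹

/-- Relations of the Artin group `A(B_n)`.  Generator `0` is `t` and generator
`i` (for `1 ≤ i ≤ n - 1`) is `s_i`. -/
def BnRels (n : ℕ) : Set (FreeGroup (Fin n)) :=
  { r | ∃ i j : Fin n,
      ((i : ℕ) = 0 ∧ (j : ℕ) = 1 ∧ r = w4Rel (.of i) (.of j)) ∨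
      (1 ≤ (i : ℕ) ∧ (j : ℕ) = (i : ℕ) + 1 ∧ r = braidRel (.of i) (.of j)) ∨
      ((i : ℕ) = 0 ∧ 2 ≤ (j : ℕ) ∧ r = commRel (.of i) (.of j)) ∨
      (1 ≤ (i : ℕ) ∧ (i : ℕ) + 2 ≤ (j : ℕ) ∧ r = commRel (.of i) (.of j)) }

/-- The Artin group `A(B_n)`. -/
abbrev ArtinB (n : ℕ) : Type := PresentedGroup (BnRels n)

/-- The standard generators of `A(B_n)`: `bgen n 0 = t` and `bgen n i = s_i`
for `1 ≤ i ≤ n - 1` (junk value `1` otherwise). -/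
def bgen (n : ℕ) (i : ℕ) : ArtinB n :=
  if h : i < n then PresentedGroup.of ⟨i, h⟩ else 1

/-- The element `δ = t · s_1 · s_2 ⋯ s_{n-1}` of `A(B_n)`. -/
def delta (n : ℕ) : ArtinB n := ((List.range n).map (bgen n)).prod

/-- The elements `s_1, …, s_n` of `A(B_n)`, where `s_n = δ · s_{n-1} · δ⁻¹`. -/
def sgen (n : ℕ) (i : ℕ) : ArtinB n :=
  if i = n then delta n * bgen n (n - 1) * (delta n)⁻¹ else bgen n i

/-! ### Infrastructure -/

section Dev
variable (n : ℕ)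

/-- Partial products of generators. -/
def W (a k : ℕ) : ArtinB n := ((List.range' a k).map (bgen n)).prod

lemma W_zero (a : ℕ) : W n a 0 = 1 := rfl

lemma W_succ_left (a k : ℕ) : W n a (k+1) = bgen n a * W n (a+1) k := by
  rw [W, List.range'_succ]; simp [W]

lemma W_succ_right (a k : ℕ) : W n a (k+1) = W n a k * bgen n (a+k) := by
  rw [W, List.range'_concat]; simp [W]

lemma W_append (a p q : ℕ) : W n a (p+q) = W n a p * W n (a+p) q := by
  induction q with
  | zero => rw [W_zero, mul_one]; rfl
  | succ q ih =>
      rw [← Nat.add_assoc, W_succ_right, ih, W_succ_right, mul_assoc, Nat.add_assoc]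

lemma W_one (a : ℕ) : W n a 1 = bgen n a := by
  rw [W_succ_left, W_zero, mul_one]

lemma delta_eq : delta n = W n 0 n := by
  rw [delta, W, List.range_eq_range']

/-- A relator of `BnRels` maps to `1`. -/
lemma rel_one {r : FreeGroup (Fin n)} (h : r ∈ BnRels n) :
    PresentedGroup.mk (BnRels n) r = 1 :=
  (QuotientGroup.eq_one_iff r).mpr (Subgroup.subset_normalClosure h)

lemma bgen_of {i : ℕ} (h : i < n) :
    bgen n i = PresentedGroup.mk (BnRels n) (FreeGroup.of (⟨i, h⟩ : Fin n)) := by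
  rw [bgen, dif_pos h]; rfl

/-- The weight-4 relation `t s₁ t s₁ = s₁ t s₁ t`. -/
lemma rel_w4 (hn : 2 ≤ n) :
    bgen n 0 * bgen n 1 * bgen n 0 * bgen n 1 = bgen n 1 * bgen n 0 * bgen n 1 * bgen n 0 := by
  have h0 : (0:ℕ) < n := by omega
  have h1 : (1:ℕ) < n := by omega
  have hr : w4Rel (FreeGroup.of (⟨0, h0⟩ : Fin n)) (FreeGroup.of (⟨1, h1⟩ : Fin n)) ∈ BnRels n :=
    ⟨⟨0, h0⟩, ⟨1, h1⟩, Or.inl ⟨rfl, rfl, rfl⟩⟩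
  have h := rel_one n hr
  rw [w4Rel] at h
  simp only [map_mul, map_inv] at h
  rw [mul_inv_eq_one] at h
  rw [bgen_of n h0, bgen_of n h1]
  exact h

/-- The braid relation `sᵢ sᵢ₊₁ sᵢ = sᵢ₊₁ sᵢ sᵢ₊₁` for `1 ≤ i`, `i + 1 ≤ n - 1`. -/
lemma rel_braid {i : ℕ} (h1 : 1 ≤ i) (h2 : i + 1 < n) :
    bgen n i * bgen n (i+1) * bgen n i = bgen n (i+1) * bgen n i * bgen n (i+1) := by
  have hi : i < n := by omega
  have hr : braidRel (FreeGroup.of (⟨i, hi⟩ : Fin n)) (FreeGroup.of (⟨i+1, h2⟩ : Fin n))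
      ∈ BnRels n :=
    ⟨⟨i, hi⟩, ⟨i+1, h2⟩, Or.inr (Or.inl ⟨h1, rfl, rfl⟩)⟩
  have h := rel_one n hr
  rw [braidRel] at h
  simp only [map_mul, map_inv] at h
  rw [mul_inv_eq_one] at h
  rw [bgen_of n hi, bgen_of n h2]
  exact h

/-- `t` commutes with `sⱼ` for `2 ≤ j`. -/
lemma comm_t_s {j : ℕ} (h2 : 2 ≤ j) : Commute (bgen n 0) (bgen n j) := by
  by_cases hj : j < n
  · have h0 : (0:ℕ) < n := by omega
    have hr : commRel (FreeGroup.of (⟨0, h0⟩ : Fin n)) (FreeGroup.of (⟨j, hj⟩ : Fin n))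
        ∈ BnRels n :=
      ⟨⟨0, h0⟩, ⟨j, hj⟩, Or.inr (Or.inr (Or.inl ⟨rfl, h2, rfl⟩))⟩
    have h := rel_one n hr
    rw [commRel] at h
    simp only [map_mul, map_inv] at h
    rw [mul_inv_eq_one] at h
    rw [Commute, SemiconjBy, bgen_of n h0, bgen_of n hj]
    exact h
  · have hj1 : bgen n j = 1 := by rw [bgen, dif_neg hj]
    rw [hj1]; exact Commute.one_right _

/-- `sᵢ` commutes with `sⱼ` for `1 ≤ i`, `i + 2 ≤ j`. -/
lemma comm_s_s {i j : ℕ} (h1 : 1 ≤ i) (h2 : i + 2 ≤ j) : Commute (bgen n i) (bgen n j) := by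
  by_cases hj : j < n
  · have hi : i < n := by omega
    have hr : commRel (FreeGroup.of (⟨i, hi⟩ : Fin n)) (FreeGroup.of (⟨j, hj⟩ : Fin n))
        ∈ BnRels n :=
      ⟨⟨i, hi⟩, ⟨j, hj⟩, Or.inr (Or.inr (Or.inr ⟨h1, h2, rfl⟩))⟩
    have h := rel_one n hr
    rw [commRel] at h
    simp only [map_mul, map_inv] at h
    rw [mul_inv_eq_one] at h
    rw [Commute, SemiconjBy, bgen_of n hi, bgen_of n hj]
    exact h
  · have hj1 : bgen n j = 1 := by rw [bgen, dif_neg hj]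
    rw [hj1]; exact Commute.one_right _

/-- Any generator commutes with a block whose entries all commute with it. -/
lemma comm_W {c : ArtinB n} {a k : ℕ} (h : ∀ j, a ≤ j → j < a + k → Commute c (bgen n j)) :
    Commute c (W n a k) := by
  rw [W]
  apply Commute.list_prod_right
  intro x hx
  simp only [List.mem_map, List.mem_range'_1] at hx
  obtain ⟨j, ⟨hj1, hj2⟩, rfl⟩ := hx
  exact h j hj1 (by omega)

/-! ### Generic helpers -/

lemma swap_r {G : Type*} [Group G] {a b : G} (h : Commute a b) (c : G) :
    a * (b * c) = b * (a * c) := by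
  rw [← mul_assoc, h.eq, mul_assoc]

lemma braid_r {G : Type*} [Group G] {x y : G} (hb : x * y * x = y * x * y) (c : G) :
    x * (y * (x * c)) = y * (x * (y * c)) := by
  rw [← mul_assoc, ← mul_assoc, hb, mul_assoc, mul_assoc]

lemma w4_r {G : Type*} [Group G] {x y : G} (hb : x * y * x * y = y * x * y * x) (c : G) :
    x * (y * (x * (y * c))) = y * (x * (y * (x * c))) := by
  rw [← mul_assoc, ← mul_assoc, ← mul_assoc, hb, mul_assoc, mul_assoc, mul_assoc]

/-! ### The shift lemmas -/

/-- `σ sᵢ = sᵢ₊₁ σ` for `1 ≤ i ≤ n-2`, where `σ = s₁ ⋯ s_{n-1}`. -/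
lemma sigma_shift {i : ℕ} (h1 : 1 ≤ i) (h2 : i + 1 ≤ n - 1) :
    W n 1 (n-1) * bgen n i = bgen n (i+1) * W n 1 (n-1) := by
  have hn' : i + 1 < n := by omega
  have hd : W n 1 (n-1) =
      W n 1 (i-1) * (bgen n i * (bgen n (i+1) * W n (i+2) (n-1-(i+1)))) := by
    calc W n 1 (n-1) = W n 1 ((i+1) + (n-1-(i+1))) := by rw [show (i+1) + (n-1-(i+1)) = n-1 by omega]
      _ = W n 1 (i+1) * W n (1+(i+1)) (n-1-(i+1)) := W_append n 1 (i+1) (n-1-(i+1))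
      _ = W n 1 ((i-1)+2) * W n (i+2) (n-1-(i+1)) := by
            rw [show (i-1)+2 = i+1 by omega, show 1+(i+1) = i+2 by omega]
      _ = (W n 1 (i-1) * W n (1+(i-1)) 2) * W n (i+2) (n-1-(i+1)) := by rw [W_append]
      _ = (W n 1 (i-1) * (bgen n i * bgen n (i+1))) * W n (i+2) (n-1-(i+1)) := by
            rw [show 1+(i-1) = i by omega, show (2:ℕ) = 1+1 by rfl, W_succ_left, W_one]
      _ = _ := by simp only [mul_assoc]
  have hBx : Commute (bgen n i) (W n (i+2) (n-1-(i+1))) :=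
    comm_W n (fun j hj1 _ => comm_s_s n h1 hj1)
  have hAy : Commute (W n 1 (i-1)) (bgen n (i+1)) :=
    (comm_W n (fun j hj1 hj2 => (comm_s_s n hj1 (by omega)).symm)).symm
  have hbr := rel_braid n h1 hn'
  rw [hd]
  simp only [mul_assoc]
  rw [← hBx.eq, braid_r hbr, swap_r hAy]

/-- `δ sᵢ = sᵢ₊₁ δ` for `1 ≤ i ≤ n-2`. -/
lemma delta_shift (hn : 2 ≤ n) {i : ℕ} (h1 : 1 ≤ i) (h2 : i + 1 ≤ n - 1) :
    W n 0 n * bgen n i = bgen n (i+1) * W n 0 n := by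
  have hδ : W n 0 n = bgen n 0 * W n 1 (n-1) := by
    rw [show n = (n-1)+1 by omega, W_succ_left, show (0:ℕ)+1 = 1 by rfl,
      show (n-1)+1-1 = n-1 by omega]
  rw [hδ, mul_assoc, sigma_shift n h1 h2, ← mul_assoc,
    (comm_t_s n (show 2 ≤ i+1 by omega)).eq, mul_assoc]

/-- `σ (s₁ ⋯ s_p) = (s₂ ⋯ s_{p+1}) σ` for `p ≤ n-2`. -/
lemma sigma_block (hn : 2 ≤ n) :
    ∀ p, p ≤ n - 2 → W n 1 (n-1) * W n 1 p = W n 2 p * W n 1 (n-1) := by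
  intro p
  induction p with
  | zero => intro _; rw [W_zero, W_zero, mul_one, one_mul]
  | succ p ih =>
      intro hp
      have ih' := ih (by omega)
      calc W n 1 (n-1) * W n 1 (p+1)
          = W n 1 (n-1) * (W n 1 p * bgen n (p+1)) := by
            rw [W_succ_right, show 1+p = p+1 by omega]
        _ = (W n 1 (n-1) * W n 1 p) * bgen n (p+1) := by rw [mul_assoc]
        _ = (W n 2 p * W n 1 (n-1)) * bgen n (p+1) := by rw [ih']
        _ = W n 2 p * (W n 1 (n-1) * bgen n (p+1)) := by rw [mul_assoc]
        _ = W n 2 p * (bgen n (p+2) * W n 1 (n-1)) := by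
            rw [sigma_shift n (by omega) (by omega)]
        _ = (W n 2 p * bgen n (p+2)) * W n 1 (n-1) := by rw [mul_assoc]
        _ = W n 2 (p+1) * W n 1 (n-1) := by rw [W_succ_right, show 2+p = p+2 by omega]

/-- The key relation `δ² s_{n-1} = s₁ δ²`. -/
lemma key_rel (hn : 2 ≤ n) :
    W n 0 n * W n 0 n * bgen n (n-1) = bgen n 1 * (W n 0 n * W n 0 n) := by
  have hδ : W n 0 n = bgen n 0 * W n 1 (n-1) := by
    rw [show n = (n-1)+1 by omega, W_succ_left, show (0:ℕ)+1 = 1 by rfl,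
      show (n-1)+1-1 = n-1 by omega]
  have hW2 : bgen n 1 * W n 2 (n-2) = W n 1 (n-1) := by
    rw [show n-1 = (n-2)+1 by omega, W_succ_left, show (1:ℕ)+1 = 2 by rfl]
  have hcomm : Commute (bgen n 0) (W n 2 (n-2)) := comm_W n (fun j hj1 _ => comm_t_s n hj1)
  have g2 : ∀ c : ArtinB n, W n 1 (n-1) * (bgen n 0 * c)
      = bgen n 1 * (bgen n 0 * (W n 2 (n-2) * c)) := by
    intro c
    rw [← mul_assoc, ← mul_assoc, ← mul_assoc]
    congr 1
    rw [← hW2, mul_assoc, ← hcomm.eq, ← mul_assoc]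
  have hWlast : W n 1 (n-1) = W n 1 (n-2) * bgen n (n-1) := by
    rw [show n-1 = (n-2)+1 by omega, W_succ_right, show 1+(n-2) = (n-2)+1 by omega,
      show (n-2)+1 = n-1 by omega]
  have f5 : W n 2 (n-2) * (W n 1 (n-1) * bgen n (n-1)) = W n 1 (n-1) * W n 1 (n-1) := by
    calc W n 2 (n-2) * (W n 1 (n-1) * bgen n (n-1))
        = (W n 2 (n-2) * W n 1 (n-1)) * bgen n (n-1) := by rw [mul_assoc]
      _ = (W n 1 (n-1) * W n 1 (n-2)) * bgen n (n-1) := by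
          rw [sigma_block n hn (n-2) le_rfl]
      _ = W n 1 (n-1) * (W n 1 (n-2) * bgen n (n-1)) := by rw [mul_assoc]
      _ = W n 1 (n-1) * W n 1 (n-1) := by rw [← hWlast]
  have f5' : bgen n 1 * (W n 2 (n-2) * W n 1 (n-1)) = W n 1 (n-1) * W n 1 (n-1) := by
    rw [← mul_assoc, hW2]
  have hw4 := rel_w4 n hn
  calc W n 0 n * W n 0 n * bgen n (n-1)
      = bgen n 0 * (W n 1 (n-1) * (bgen n 0 * (W n 1 (n-1) * bgen n (n-1)))) := by
        rw [hδ]; simp only [mul_assoc]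
    _ = bgen n 0 * (bgen n 1 * (bgen n 0 * (W n 2 (n-2) * (W n 1 (n-1) * bgen n (n-1))))) := by
        rw [g2]
    _ = bgen n 0 * (bgen n 1 * (bgen n 0 * (W n 1 (n-1) * W n 1 (n-1)))) := by rw [f5]
    _ = bgen n 0 * (bgen n 1 * (bgen n 0 * (bgen n 1 * (W n 2 (n-2) * W n 1 (n-1))))) := by
        rw [f5']
    _ = bgen n 1 * (bgen n 0 * (bgen n 1 * (bgen n 0 * (W n 2 (n-2) * W n 1 (n-1))))) :=
        w4_r hw4 _
    _ = bgen n 1 * (bgen n 0 * (W n 1 (n-1) * (bgen n 0 * W n 1 (n-1)))) := by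
        rw [← g2]
    _ = bgen n 1 * (W n 0 n * W n 0 n) := by rw [hδ]; simp only [mul_assoc]

/-! ### sgen facts -/

lemma bgen_out {i : ℕ} (h : ¬ i < n) : bgen n i = 1 := by rw [bgen, dif_neg h]

lemma sgen_lt {i : ℕ} (h : i ≠ n) : sgen n i = bgen n i := by rw [sgen, if_neg h]

lemma sgen_n : sgen n n = delta n * bgen n (n-1) * (delta n)⁻¹ := by rw [sgen, if_pos rfl]

/-- Conjugation by `δ` cyclically permutes `s₁, …, s_n`. -/
lemma delta_conj (hn : 2 ≤ n) {i : ℕ} (h1 : 1 ≤ i) (h2 : i ≤ n) :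
    delta n * sgen n i * (delta n)⁻¹ = sgen n (if i = n then 1 else i + 1) := by
  rcases eq_or_lt_of_le h2 with hin | hlt
  · -- i = n : δ (δ s_{n-1} δ⁻¹) δ⁻¹ = s₁
    obtain rfl : n = i := hin.symm
    rw [if_pos rfl, sgen_n, sgen_lt n (by omega), delta_eq]
    have hk := key_rel n hn
    calc W n 0 n * (W n 0 n * bgen n (n-1) * (W n 0 n)⁻¹) * (W n 0 n)⁻¹
        = (W n 0 n * W n 0 n * bgen n (n-1)) * (W n 0 n * W n 0 n)⁻¹ := by group
      _ = bgen n 1 * (W n 0 n * W n 0 n) * (W n 0 n * W n 0 n)⁻¹ := by rw [hk]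
      _ = bgen n 1 := by group
  · rcases eq_or_lt_of_le (show i + 1 ≤ n by omega) with he | hlt2
    · -- i = n - 1 : definition of s_n
      rw [if_neg (by omega), he, sgen_n, show i = n - 1 by omega,
        sgen_lt n (show n - 1 ≠ n by omega)]
    · -- i ≤ n - 2 : the shift relation
      rw [if_neg (by omega), sgen_lt n (by omega), sgen_lt n (by omega), delta_eq]
      rw [delta_shift n hn h1 (by omega), mul_assoc, mul_inv_cancel, mul_one]

lemma delta_conj' (hn : 2 ≤ n) {j : ℕ} (h1 : 1 ≤ j) (h2 : j ≤ n) :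
    (delta n)⁻¹ * sgen n j * delta n = sgen n (if j = 1 then n else j - 1) := by
  set i := if j = 1 then n else j - 1 with hi
  have hi1 : 1 ≤ i := by rw [hi]; split <;> omega
  have hi2 : i ≤ n := by rw [hi]; split <;> omega
  have h := delta_conj n hn hi1 hi2
  have hj : (if i = n then 1 else i + 1) = j := by
    rw [hi]; rcases eq_or_ne j 1 with rfl | hj1
    · simp
    · rw [if_neg hj1, if_neg (by omega)]; omega
  rw [hj] at h
  rw [← h]; group

/-! ### Membership facts -/

/-- The subgroup generated by `s₁, …, s_n`. -/
def K : Subgroup (ArtinB n) := Subgroup.closure (sgen n '' Set.Icc 1 n)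

lemma sgen_mem_K {i : ℕ} (h1 : 1 ≤ i) (h2 : i ≤ n) : sgen n i ∈ K n :=
  Subgroup.subset_closure ⟨i, ⟨h1, h2⟩, rfl⟩

lemma bgen_mem_K (hn : 2 ≤ n) {i : ℕ} (h1 : 1 ≤ i) (h2 : i ≤ n - 1) : bgen n i ∈ K n := by
  rw [← sgen_lt n (by omega)]
  exact sgen_mem_K n h1 (by omega)

lemma W_mem_K (hn : 2 ≤ n) {a : ℕ} (ha : 1 ≤ a) : ∀ k, a + k ≤ n → W n a k ∈ K n := by
  intro k
  induction k with
  | zero => intro _; rw [W_zero]; exact one_mem _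
  | succ k ih =>
      intro hk
      rw [W_succ_right]
      exact mul_mem (ih (by omega)) (bgen_mem_K n hn (by omega) (by omega))

lemma mem_normalizer_of {G : Type*} [Group G] {S : Set G} {g : G}
    (h1 : ∀ x ∈ S, g * x * g⁻¹ ∈ Subgroup.closure S)
    (h2 : ∀ x ∈ S, g⁻¹ * x * g ∈ Subgroup.closure S) :
    g ∈ Subgroup.normalizer (Subgroup.closure S : Set G) := by
  have key : ∀ (g : G), (∀ x ∈ S, g * x * g⁻¹ ∈ Subgroup.closure S) →
      ∀ h ∈ Subgroup.closure S, g * h * g⁻¹ ∈ Subgroup.closure S := by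
    intro g hg h hh
    have hle : Subgroup.closure S ≤
        (Subgroup.closure S).comap ((MulAut.conj g).toMonoidHom) := by
      rw [Subgroup.closure_le]
      intro x hx
      have : (MulAut.conj g).toMonoidHom x = g * x * g⁻¹ := by
        simp [MulAut.conj]
      simp only [Set.mem_preimage, SetLike.mem_coe, Subgroup.mem_comap, this]
      exact hg x hx
    have := hle hh
    rw [Subgroup.mem_comap] at this
    have he : (MulAut.conj g).toMonoidHom h = g * h * g⁻¹ := by
      simp [MulAut.conj]
    rwa [he] at this
  rw [Subgroup.mem_normalizer_iff]
  intro h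
  constructor
  · exact fun hh => key g h1 h hh
  · intro hh
    have h2' : ∀ x ∈ S, g⁻¹ * x * (g⁻¹)⁻¹ ∈ Subgroup.closure S := by
      simpa using h2
    have := key g⁻¹ h2' _ hh
    rwa [show g⁻¹ * (g * h * g⁻¹) * (g⁻¹)⁻¹ = h by group] at this

lemma delta_mem_normalizer (hn : 2 ≤ n) : delta n ∈ Subgroup.normalizer (K n : Set (ArtinB n)) := by
  apply mem_normalizer_of
  · rintro x ⟨i, ⟨hi1, hi2⟩, rfl⟩
    rw [delta_conj n hn hi1 hi2]
    apply sgen_mem_K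
    · split <;> omega
    · split <;> omega
  · rintro x ⟨i, ⟨hi1, hi2⟩, rfl⟩
    rw [delta_conj' n hn hi1 hi2]
    apply sgen_mem_K
    · split <;> omega
    · split <;> omega

lemma K_normal (hn : 2 ≤ n) : (K n).Normal := by
  rw [← Subgroup.normalizer_eq_top_iff]
  rw [eq_top_iff, ← PresentedGroup.closure_range_of (BnRels n), Subgroup.closure_le]
  rintro x ⟨y, rfl⟩
  have hy : PresentedGroup.of y = bgen n (y : ℕ) := by
    rw [bgen, dif_pos y.isLt, Fin.eta]
  rcases Nat.eq_zero_or_pos (y : ℕ) with h0 | h1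
  · -- `t = δ σ⁻¹`
    have hδ : W n 0 n = bgen n 0 * W n 1 (n-1) := by
      rw [show n = (n-1)+1 by omega, W_succ_left, show (0:ℕ)+1 = 1 by rfl,
        show (n-1)+1-1 = n-1 by omega]
    have ht : PresentedGroup.of y = delta n * (W n 1 (n-1))⁻¹ := by
      rw [hy, h0, delta_eq, hδ, mul_assoc, mul_inv_cancel, mul_one]
    rw [SetLike.mem_coe, ht]
    exact mul_mem (delta_mem_normalizer n hn)
      (inv_mem (Subgroup.le_normalizer (W_mem_K n hn (le_refl 1) (n-1) (by omega))))
  · rw [SetLike.mem_coe, hy]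
    exact Subgroup.le_normalizer (bgen_mem_K n hn h1 (by omega))

/-! ### The exponent-sum homomorphism -/

/-- The defining map on generators. -/
def fmap : Fin n → Multiplicative ℤ :=
  fun i => if (i : ℕ) = 0 then Multiplicative.ofAdd 1 else 1

lemma fmap_rels : ∀ r ∈ BnRels n, FreeGroup.lift (fmap n) r = 1 := by
  rintro r ⟨i, j, hc | hc | hc | hc⟩
  · obtain ⟨hi, hj, rfl⟩ := hc
    have hj' : (j : ℕ) ≠ 0 := by omega
    simp [w4Rel, fmap, hi, hj']
  · obtain ⟨hi, hj, rfl⟩ := hc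
    have hi' : (i : ℕ) ≠ 0 := by omega
    have hj' : (j : ℕ) ≠ 0 := by omega
    simp [braidRel, fmap, hi', hj']
  · obtain ⟨hi, hj, rfl⟩ := hc
    have hj' : (j : ℕ) ≠ 0 := by omega
    simp [commRel, fmap, hi, hj']
  · obtain ⟨hi, hj, rfl⟩ := hc
    have hi' : (i : ℕ) ≠ 0 := by omega
    have hj' : (j : ℕ) ≠ 0 := by omega
    simp [commRel, fmap, hi', hj']

/-- The exponent-sum homomorphism. -/
def expSum : ArtinB n →* Multiplicative ℤ := PresentedGroup.toGroup (fmap_rels n)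

lemma of_eq_bgen (y : Fin n) : PresentedGroup.of y = bgen n (y : ℕ) := by
  rw [bgen, dif_pos y.isLt, Fin.eta]

lemma expSum_bgen {i : ℕ} (h : i < n) :
    expSum n (bgen n i) = if i = 0 then Multiplicative.ofAdd 1 else 1 := by
  rw [bgen, dif_pos h, expSum, PresentedGroup.toGroup.of, fmap]

lemma expSum_t (hn : 2 ≤ n) : expSum n (bgen n 0) = Multiplicative.ofAdd 1 := by
  rw [expSum_bgen n (by omega), if_pos rfl]

lemma expSum_s (hn : 2 ≤ n) {i : ℕ} (h1 : 1 ≤ i) (h2 : i ≤ n - 1) :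
    expSum n (bgen n i) = 1 := by
  rw [expSum_bgen n (by omega), if_neg (by omega)]

lemma K_le_ker (hn : 2 ≤ n) : K n ≤ MonoidHom.ker (expSum n) := by
  rw [K, Subgroup.closure_le]
  rintro x ⟨i, ⟨hi1, hi2⟩, rfl⟩
  rw [SetLike.mem_coe, MonoidHom.mem_ker]
  rcases eq_or_ne i n with hin | hne
  · rw [hin, sgen_n, map_mul, map_mul, map_inv,
      expSum_s n hn (by omega) (by omega), mul_one, mul_inv_cancel]
  · rw [sgen_lt n hne, expSum_s n hn hi1 (by omega)]

end Dev

/-- The main theorem. -/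
theorem main (n : ℕ) (hn : 2 ≤ n) :
    ∃ φ : ArtinB n →* Multiplicative ℤ,
      (φ (bgen n 0) = Multiplicative.ofAdd 1 ∧
        ∀ i : ℕ, 1 ≤ i → i ≤ n - 1 → φ (bgen n i) = 1) ∧
      (∀ ψ : ArtinB n →* Multiplicative ℤ,
        (ψ (bgen n 0) = Multiplicative.ofAdd 1 ∧
          ∀ i : ℕ, 1 ≤ i → i ≤ n - 1 → ψ (bgen n i) = 1) → ψ = φ) ∧
      MonoidHom.ker φ = Subgroup.closure (sgen n '' Set.Icc 1 n) := by
  refine ⟨expSum n, ⟨expSum_t n hn, fun i h1 h2 => expSum_s n hn h1 h2⟩, ?_, ?_⟩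
  · -- uniqueness
    intro ψ ⟨hψt, hψs⟩
    apply PresentedGroup.ext
    intro x
    rw [of_eq_bgen]
    have hx := x.isLt
    rcases Nat.eq_zero_or_pos (x : ℕ) with h0 | h1
    · rw [h0, hψt, expSum_t n hn]
    · rw [hψs _ h1 (by omega), expSum_s n hn h1 (by omega)]
  · -- the kernel
    haveI hN : (K n).Normal := K_normal n hn
    set q : ArtinB n →* ArtinB n ⧸ K n := QuotientGroup.mk' (K n) with hq
    have hcomp : (zpowersHom _ (q (bgen n 0))).comp (expSum n) = q := by
      apply PresentedGroup.ext
      intro x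
      rw [MonoidHom.comp_apply, of_eq_bgen]
      have hx := x.isLt
      rcases Nat.eq_zero_or_pos (x : ℕ) with h0 | h1
      · rw [h0, expSum_t n hn]
        simp
      · rw [expSum_s n hn h1 (by omega), map_one]
        symm
        rw [hq, QuotientGroup.mk'_apply, QuotientGroup.eq_one_iff]
        have : bgen n (x : ℕ) = sgen n (x : ℕ) := (sgen_lt n (by omega)).symm
        rw [this]
        exact sgen_mem_K n h1 (by omega)
    show MonoidHom.ker (expSum n) = K n
    apply le_antisymm
    · intro g hg
      rw [MonoidHom.mem_ker] at hg
      have : q g = 1 := by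
        rw [← hcomp, MonoidHom.comp_apply, hg, map_one]
      rwa [hq, QuotientGroup.mk'_apply, QuotientGroup.eq_one_iff] at this
    · exact K_le_ker n hn


/-- For `n ≥ 2` there is a unique group homomorphism
`A(B_n) → ℤ` sending `t` to `1` and each `s_i` (`1 ≤ i ≤ n - 1`) to `0`, and
its kernel is the subgroup generated by `s_1, …, s_n`. -/
theorem ker_exponent_sum_hom_eq_closure (n : ℕ) (hn : 2 ≤ n) :
    ∃ φ : ArtinB n →* Multiplicative ℤ,
      (φ (bgen n 0) = Multiplicative.ofAdd 1 ∧
        ∀ i : ℕ, 1 ≤ i → i ≤ n - 1 → φ (bgen n i) = 1) ∧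
      (∀ ψ : ArtinB n →* Multiplicative ℤ,
        (ψ (bgen n 0) = Multiplicative.ofAdd 1 ∧
          ∀ i : ℕ, 1 ≤ i → i ≤ n - 1 → ψ (bgen n i) = 1) → ψ = φ) ∧
      MonoidHom.ker φ = Subgroup.closure (sgen n '' Set.Icc 1 n) := main n hn

end Stmt1
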